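/- Let σ > 0 and δ ∈ (0,1). Then the infimum over α > 1 of α/(2σ²) + (1/(α−1))·log(1/δ) is bounded above by (1/σ)·√(2·log(1/δ)) + 1/(2σ²). -/

import Mathlib

theorem stmt_7 (σ δ : ℝ) (hσ : 0 < σ) (hδ : δ ∈ Set.Ioo (0:ℝ) 1) :
    sInf ((fun α => α / (2 * σ ^ 2) + (1 / (α - 1)) * Real.log (1 / δ)) '' Set.Ioi 1)
      ≤ (1 / σ) * Real.sqrt (2 * Real.log (1 / δ)) + 1 / (2 * σ ^ 2) := by
  obtain ⟨hδ0, hδ1⟩ := hδ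
  set L := Real.log (1 / δ) with hLdef
  have hL : 0 < L := Real.log_pos (by rw [lt_div_iff₀ hδ0]; linarith)
  set s := Real.sqrt (2 * L) with hsdef
  have hs : 0 < s := Real.sqrt_pos.mpr (by linarith)
  have hsq : s ^ 2 = 2 * L := Real.sq_sqrt (by linarith)
  set α : ℝ := 1 + σ * s with hαdef
  have hα : α ∈ Set.Ioi (1:ℝ) := by
    simp only [Set.mem_Ioi, hαdef]
    nlinarith
  have hbdd : BddBelow ((fun α => α / (2 * σ ^ 2) + (1 / (α - 1)) * L) '' Set.Ioi 1) := by
    refine ⟨0, ?_⟩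
    rintro x ⟨β, hβ, rfl⟩
    simp only [Set.mem_Ioi] at hβ
    have h1 : 0 < β / (2 * σ ^ 2) := by positivity
    have h2 : 0 ≤ (1 / (β - 1)) * L := by
      have : 0 < β - 1 := by linarith
      positivity
    linarith
  have hmem : α / (2 * σ ^ 2) + (1 / (α - 1)) * L ∈
      ((fun α => α / (2 * σ ^ 2) + (1 / (α - 1)) * L) '' Set.Ioi 1) :=
    Set.mem_image_of_mem _ hα
  have hle := csInf_le hbdd hmem
  have hval : α / (2 * σ ^ 2) + (1 / (α - 1)) * L
      = (1 / σ) * s + 1 / (2 * σ ^ 2) := by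
    have hα1 : α - 1 = σ * s := by simp [hαdef]
    rw [hα1, hαdef]
    field_simp
    linear_combination (-σ) * hsq
  calc sInf _ ≤ _ := hle
    _ = _ := hval
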